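/- For every i with 1 ≤ i ≤ n−m−1, one has σ(m+i) = σ(i)+1 and u_{σ(m+i)} = u_{σ(i)}+1. For every i with 1 ≤ i ≤ m−1, one has σ(n−m+i) = σ(i)−1 and u_{σ(n−m+i)} = u_{σ(i)}−2. -/

import Mathlib

/-- With `k` the increasing enumeration of `𝔉(m,n)`,
`u j` the index with `k (u j) = j*m`, `m̄` an inverse of `m` modulo `n`,
and `σ i = [i * m̄]_n`:  for `1 ≤ i ≤ n-m-1` one has `σ (m+i) = σ i + 1`
and `u (σ (m+i)) = u (σ i) + 1`; for `1 ≤ i ≤ m-1` one has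
`σ (n-m+i) = σ i - 1` and `u (σ (n-m+i)) = u (σ i) - 2`. -/
theorem sigma_shift (m n : ℕ) (hm : 2 ≤ m) (hmn : m < n)
    (hcop : Nat.Coprime m n) (k : ℕ → ℕ)
    (hmono : ∀ i j : ℕ, i < j → j < m + n → k i < k j)
    (hmem : ∀ x : ℕ, ((m ∣ x ∨ n ∣ x) ∧ x ≤ m * n) ↔ ∃ i < m + n, k i = x)
    (u : ℕ → ℕ)
    (hu : ∀ j ≤ n, u j < m + n ∧ k (u j) = j * m)
    (mbar : ℕ) (hmbar : m * mbar ≡ 1 [MOD n])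
    (σ : ℕ → ℕ) (hσ : ∀ i, σ i = i * mbar % n) :
    (∀ i, 1 ≤ i → i ≤ n - m - 1 →
      σ (m + i) = σ i + 1 ∧ u (σ (m + i)) = u (σ i) + 1) ∧
    (∀ i, 1 ≤ i → i ≤ m - 1 →
      σ (n - m + i) = σ i - 1 ∧ u (σ (n - m + i)) = u (σ i) - 2) := by
  have hn0 : 0 < n := by omega
  -- k reflects order
  have hrefl : ∀ a b, a < m + n → b < m + n → k a < k b → a < b := by
    intro a b ha hb hk
    rcases lt_trichotomy a b with h | h | h
    · exact h
    · subst h; omega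
    · exact absurd (hmono b a h ha) (by omega)
  -- adjacency
  have hadj : ∀ a b, a < m + n → b < m + n → k a < k b →
      (∀ x, (m ∣ x ∨ n ∣ x) ∧ x ≤ m * n → ¬ (k a < x ∧ x < k b)) → b = a + 1 := by
    intro a b ha hb hk hgap
    have hab : a < b := hrefl a b ha hb hk
    by_contra h
    have h2 : a + 1 < m + n := by omega
    have hx : (m ∣ k (a+1) ∨ n ∣ k (a+1)) ∧ k (a+1) ≤ m * n :=
      (hmem (k (a+1))).mpr ⟨a+1, h2, rfl⟩
    exact hgap _ hx ⟨hmono a (a+1) (by omega) h2, hmono (a+1) b (by omega) hb⟩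
  have modeq_eq : ∀ a b : ℕ, a ≡ b [MOD n] → a < n → b < n → a = b := by
    intro a b h ha hb
    have h' : a % n = b % n := h
    rwa [Nat.mod_eq_of_lt ha, Nat.mod_eq_of_lt hb] at h'
  -- key: (σ i) * m % n = i for i < n
  have key : ∀ i, i < n → (σ i) * m % n = i := by
    intro i hi
    rw [hσ]
    have h1 : (i * mbar % n) * m ≡ i * mbar * m [MOD n] :=
      Nat.ModEq.mul_right m (Nat.mod_modEq _ n)
    have h2 : i * mbar * m ≡ i * 1 [MOD n] := by
      calc i * mbar * m = i * (m * mbar) := by ring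
        _ ≡ i * 1 [MOD n] := Nat.ModEq.mul_left i hmbar
    have h3 : (i * mbar % n) * m % n = i % n := h1.trans (by simpa using h2)
    rwa [Nat.mod_eq_of_lt hi] at h3
  constructor
  · -- first part
    intro i hi1 hi2
    set s := σ i with hsdef
    have hin : i < n := by omega
    have hs : s * m % n = i := key i hin
    have hslt : s < n := by rw [hsdef, hσ]; exact Nat.mod_lt _ hn0
    obtain ⟨q, hq⟩ : ∃ q, s * m = n * q + i := by
      refine ⟨s * m / n, ?_⟩
      rw [← hs]; exact (Nat.div_add_mod _ _).symm
    -- s + 1 < n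
    have hsn : s + 1 < n := by
      by_contra h
      have hs1 : s + 1 = n := by omega
      have hsucc : (s+1) * m = s * m + m := by ring
      have e2 : (s+1) * m = n * m := by rw [hs1]
      have hd : n ∣ (i + m) := by
        have e3 : i + m = n * m - n * q := by omega
        rw [e3]
        exact Nat.dvd_sub (dvd_mul_right n m) (dvd_mul_right n q)
      have := Nat.le_of_dvd (by omega) hd
      omega
    -- sigma equality
    have c1 : σ (m + i) ≡ s + 1 [MOD n] := by
      rw [hσ]
      calc (m+i) * mbar % n ≡ (m+i) * mbar [MOD n] := Nat.mod_modEq _ _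
        _ = m * mbar + i * mbar := by ring
        _ ≡ 1 + i * mbar [MOD n] := Nat.ModEq.add_right _ hmbar
        _ ≡ 1 + s [MOD n] := Nat.ModEq.add_left _ (by rw [hsdef, hσ]; exact (Nat.mod_modEq _ _).symm)
        _ = s + 1 := by ring
    have hσeq : σ (m + i) = s + 1 :=
      modeq_eq _ _ c1 (by rw [hσ]; exact Nat.mod_lt _ hn0) hsn
    refine ⟨hσeq, ?_⟩
    rw [hσeq]
    obtain ⟨hus_lt, hus_val⟩ := hu s (by omega)
    obtain ⟨hus1_lt, hus1_val⟩ := hu (s+1) (by omega)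
    have hgap : ∀ x, (m ∣ x ∨ n ∣ x) ∧ x ≤ m * n → ¬ (k (u s) < x ∧ x < k (u (s+1))) := by
      intro x hx ⟨hl, hr⟩
      rw [hus_val] at hl
      rw [hus1_val] at hr
      have hsm : (s+1) * m = s * m + m := by ring
      rcases hx.1 with ⟨c, rfl⟩ | ⟨c, rfl⟩
      · -- m ∣ x
        have e1 : m * s = s * m := by ring
        have h1 : s < c := by
          have : m * s < m * c := by omega
          exact lt_of_mul_lt_mul_left this (Nat.zero_le m)
        have h2 : m * (s+1) ≤ m * c := Nat.mul_le_mul_left m h1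
        have e2 : m * (s+1) = s * m + m := by ring
        omega
      · -- n ∣ x
        have h1 : q < c := by
          have : n * q < n * c := by omega
          exact lt_of_mul_lt_mul_left this (Nat.zero_le n)
        have h2 : n * (q+1) ≤ n * c := Nat.mul_le_mul_left n h1
        have : n * (q+1) = n * q + n := by ring
        omega
    have := hadj (u s) (u (s+1)) hus_lt hus1_lt
      (by rw [hus_val, hus1_val, show (s+1)*m = s*m + m from by ring]; omega) hgap
    omega
  · -- second part
    intro i hi1 hi2
    set s := σ i with hsdef
    have hin : i < n := by omega
    have hs : s * m % n = i := key i hin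
    have hslt : s < n := by rw [hsdef, hσ]; exact Nat.mod_lt _ hn0
    have hs1 : 1 ≤ s := by
      rcases Nat.eq_zero_or_pos s with h | h
      · rw [h] at hs; simp at hs; omega
      · exact h
    obtain ⟨q, hq⟩ : ∃ q, s * m = n * q + i := by
      refine ⟨s * m / n, ?_⟩
      rw [← hs]; exact (Nat.div_add_mod _ _).symm
    -- sigma equality
    have c2 : σ (n - m + i) + 1 ≡ s [MOD n] := by
      rw [hσ]
      calc (n-m+i) * mbar % n + 1
          ≡ (n-m+i) * mbar + 1 [MOD n] := Nat.ModEq.add_right 1 (Nat.mod_modEq _ _)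
        _ ≡ (n-m+i) * mbar + m * mbar [MOD n] := Nat.ModEq.add_left _ hmbar.symm
        _ = (n-m+i+m) * mbar := by ring
        _ = (n+i) * mbar := by congr 1; omega
        _ = i * mbar + mbar * n := by ring
        _ ≡ i * mbar + 0 [MOD n] :=
            Nat.ModEq.add_left _ (Nat.modEq_zero_iff_dvd.mpr (dvd_mul_left n mbar))
        _ = i * mbar := by ring
        _ ≡ s [MOD n] := by rw [hsdef, hσ]; exact (Nat.mod_modEq _ _).symm
    have hσlt : σ (n - m + i) < n := by rw [hσ]; exact Nat.mod_lt _ hn0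
    have hne : σ (n - m + i) + 1 ≠ n := by
      intro h
      have : s = 0 := by
        have h0 : (0 : ℕ) ≡ s [MOD n] := by
          calc (0:ℕ) ≡ n [MOD n] := Nat.modEq_zero_iff_dvd.mpr dvd_rfl |>.symm
            _ = σ (n-m+i) + 1 := h.symm
            _ ≡ s [MOD n] := c2
        exact (modeq_eq _ _ h0 hn0 hslt).symm
      omega
    have hσeq : σ (n - m + i) = s - 1 := by
      have := modeq_eq _ _ c2 (by omega) hslt
      omega
    refine ⟨hσeq, ?_⟩
    rw [hσeq]
    obtain ⟨hus_lt, hus_val⟩ := hu s (by omega)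
    obtain ⟨hus1_lt, hus1_val⟩ := hu (s-1) (by omega)
    have hsm1 : (s-1) * m = s * m - m := by
      rw [Nat.sub_mul]; simp
    have hsm_ge : m ≤ s * m := Nat.le_mul_of_pos_left m (by omega)
    -- the intermediate element w = n*q
    have hw_le : n * q ≤ m * n := by
      have h1 : s * m ≤ n * m := Nat.mul_le_mul_right m (le_of_lt hslt)
      have : n * m = m * n := by ring
      omega
    obtain ⟨t, ht_lt, ht_val⟩ := (hmem (n * q)).mp ⟨Or.inr ⟨q, rfl⟩, hw_le⟩
    -- gap between (s-1)*m and n*q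
    have hgap1 : ∀ x, (m ∣ x ∨ n ∣ x) ∧ x ≤ m * n → ¬ (k (u (s-1)) < x ∧ x < k t) := by
      intro x hx ⟨hl, hr⟩
      rw [hus1_val, hsm1] at hl
      rw [ht_val] at hr
      rcases hx.1 with ⟨c, rfl⟩ | ⟨c, rfl⟩
      · have e1 : m * (s-1) = (s-1) * m := by ring
        have h1 : s - 1 < c := by
          have : m * (s-1) < m * c := by omega
          exact lt_of_mul_lt_mul_left this (Nat.zero_le m)
        have h2 : m * s ≤ m * c := Nat.mul_le_mul_left m (by omega)
        have e2 : m * s = s * m := by ring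
        omega
      · have h1 : c < q := by
          have : n * c < n * q := by omega
          exact lt_of_mul_lt_mul_left this (Nat.zero_le n)
        have h2 : n * (c+1) ≤ n * q := Nat.mul_le_mul_left n (by omega)
        have : n * (c+1) = n * c + n := by ring
        omega
    -- gap between n*q and s*m
    have hgap2 : ∀ x, (m ∣ x ∨ n ∣ x) ∧ x ≤ m * n → ¬ (k t < x ∧ x < k (u s)) := by
      intro x hx ⟨hl, hr⟩
      rw [ht_val] at hl
      rw [hus_val] at hr
      rcases hx.1 with ⟨c, rfl⟩ | ⟨c, rfl⟩
      · have h1 : c < s := by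
          have e2 : m * s = s * m := by ring
          have : m * c < m * s := by omega
          exact lt_of_mul_lt_mul_left this (Nat.zero_le m)
        have h2 : m * c ≤ m * (s-1) := Nat.mul_le_mul_left m (by omega)
        have e1 : m * (s-1) = (s-1) * m := by ring
        omega
      · have h1 : q < c := by
          have : n * q < n * c := by omega
          exact lt_of_mul_lt_mul_left this (Nat.zero_le n)
        have h2 : n * (q+1) ≤ n * c := Nat.mul_le_mul_left n (by omega)
        have : n * (q+1) = n * q + n := by ring
        omega
    have e1 := hadj (u (s-1)) t hus1_lt ht_lt
      (by rw [hus1_val, ht_val, hsm1]; omega) hgap1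
    have e2 := hadj t (u s) ht_lt hus_lt
      (by rw [hus_val, ht_val]; omega) hgap2
    omega
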